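/- Let G be a minimal prime graph complement with a vertex X of degree 2 having neighbors A and B, and suppose |P_A| = |P_B| = |P_a| = 1 in the 5-cycle blow-up structure; i.e., every vertex of G is X, A, B, or a duplicate of X, or one of two special vertices a, b. Then G contains an induced 5-cycle. -/

import Mathlib

/-- A minimal prime graph complement: a graph on at least 2 vertices that is
triangle-free, 3-colorable, edge-maximal with respect to these properties,
and whose complement is connected. -/
def IsMinimalPrimeGraphComplement {V : Type*} [Fintype V] (G : SimpleGraph V) : Prop :=
  Nontrivial V ∧ G.CliqueFree 3 ∧ G.Colorable 3 ∧ Gᶜ.Connected ∧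
    ∀ u v : V, u ≠ v → ¬ G.Adj u v →
      ¬ ((G ⊔ SimpleGraph.fromEdgeSet {s(u, v)}).CliqueFree 3 ∧
         (G ⊔ SimpleGraph.fromEdgeSet {s(u, v)}).Colorable 3)

set_option linter.unreachableTactic false
set_option linter.unusedTactic false

private lemma tri_free {V : Type*} {G : SimpleGraph V} (h : G.CliqueFree 3)
    {x y z : V} (hxy : G.Adj x y) (hxz : G.Adj x z) (hyz : G.Adj y z) : False := by
  classical
  exact h {x, y, z} (SimpleGraph.is3Clique_triple_iff.mpr ⟨hxy, hxz, hyz⟩)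

private lemma no_lonely {V : Type*} [Fintype V] {G : SimpleGraph V}
    (hG : IsMinimalPrimeGraphComplement G) {u v n : V}
    (huv : u ≠ v) (hadj : ¬ G.Adj u v) (hn : ∀ w, G.Adj v w → w = n)
    (hun : ¬ G.Adj u n) : False := by
  classical
  obtain ⟨-, hCF, ⟨C⟩, -, hmax⟩ := hG
  apply hmax u v huv hadj
  have hG'adj : ∀ p q : V, (G ⊔ SimpleGraph.fromEdgeSet {s(u,v)}).Adj p q →
      G.Adj p q ∨ (p = u ∧ q = v) ∨ (p = v ∧ q = u) := by
    intro p q h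
    rw [SimpleGraph.sup_adj, SimpleGraph.fromEdgeSet_adj, Set.mem_singleton_iff,
      Sym2.eq_iff] at h
    tauto
  have key : ∀ w, G.Adj u w → G.Adj v w → False := fun w h1 h2 => hun ((hn w h2) ▸ h1)
  constructor
  · -- clique free
    intro t ht
    rw [SimpleGraph.is3Clique_iff] at ht
    obtain ⟨x, y, z, hxy, hxz, hyz, rfl⟩ := ht
    have h1 := hG'adj x y hxy
    have h2 := hG'adj x z hxz
    have h3 := hG'adj y z hyz
    rcases h1 with h1 | ⟨rfl, rfl⟩ | ⟨rfl, rfl⟩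
    · rcases h2 with h2 | ⟨rfl, rfl⟩ | ⟨rfl, rfl⟩
      · rcases h3 with h3 | ⟨rfl, rfl⟩ | ⟨rfl, rfl⟩
        · exact tri_free hCF h1 h2 h3
        · exact key x h1.symm h2.symm
        · exact key x h2.symm h1.symm
      · rcases h3 with h3 | ⟨rfl, h3b⟩ | ⟨rfl, h3b⟩
        · exact key y h1 h3.symm
        · exact G.loopless.irrefl _ h1
        · first | exact huv h3b | exact huv h3b.symm
      · rcases h3 with h3 | ⟨rfl, h3b⟩ | ⟨rfl, h3b⟩
        · exact key y h3.symm h1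
        · first | exact huv h3b | exact huv h3b.symm
        · exact G.loopless.irrefl _ h1
    · rcases h2 with h2 | ⟨h2a, rfl⟩ | ⟨h2a, rfl⟩
      · rcases h3 with h3 | ⟨h3a, rfl⟩ | ⟨h3a, rfl⟩
        · exact key z h2 h3
        · first | exact huv h3a | exact huv h3a.symm
        · exact G.loopless.irrefl _ h2
      · rcases h3 with h3 | ⟨h3a, h3b⟩ | ⟨h3a, h3b⟩
        · exact G.loopless.irrefl _ h3
        · first | exact huv h3a | exact huv h3a.symm
        · first | exact huv h3b | exact huv h3b.symm
      · first | exact huv h2a | exact huv h2a.symm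
    · rcases h2 with h2 | ⟨h2a, rfl⟩ | ⟨h2a, rfl⟩
      · rcases h3 with h3 | ⟨h3a, rfl⟩ | ⟨h3a, rfl⟩
        · exact key z h3 h2
        · exact G.loopless.irrefl _ h2
        · first | exact huv h3a | exact huv h3a.symm
      · first | exact huv h2a | exact huv h2a.symm
      · rcases h3 with h3 | ⟨h3a, h3b⟩ | ⟨h3a, h3b⟩
        · exact G.loopless.irrefl _ h3
        · first | exact huv h3b | exact huv h3b.symm
        · first | exact huv h3a | exact huv h3a.symm
  · -- colorable
    obtain ⟨k, hk1, hk2⟩ : ∃ k : Fin 3, k ≠ C n ∧ k ≠ C u := by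
      have : ∀ x y : Fin 3, ∃ z : Fin 3, z ≠ x ∧ z ≠ y := by decide
      exact this _ _
    refine ⟨SimpleGraph.Coloring.mk (fun w => if w = v then k else C w) ?_⟩
    intro p q hpq
    have hne := hpq.ne
    rcases hG'adj p q hpq with h | ⟨rfl, rfl⟩ | ⟨rfl, rfl⟩
    · by_cases hp : p = v <;> by_cases hq : q = v <;> simp [hp, hq]
      · exact absurd (hp ▸ hq ▸ rfl : p = q) hne
      · subst hp; exact (hn q h) ▸ hk1
      · subst hq; exact fun hc => ((hn p h.symm) ▸ hk1) hc.symm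
      · exact C.valid h
    · simp [huv]
      exact Ne.symm hk2
    · simp [huv]
      exact hk2

private lemma build_c5 {V : Type*} {G : SimpleGraph V} {X A p q B : V}
    (h1 : G.Adj X A) (h2 : G.Adj A p) (h3 : G.Adj p q) (h4 : G.Adj q B) (h5 : G.Adj B X)
    (n1 : ¬G.Adj X p) (n2 : ¬G.Adj A q) (n3 : ¬G.Adj p B) (n4 : ¬G.Adj q X) (n5 : ¬G.Adj B A)
    (d1 : X ≠ p) (d2 : A ≠ q) (d3 : p ≠ B) (d4 : q ≠ X) (d5 : B ≠ A) :
    Nonempty (SimpleGraph.cycleGraph 5 ↪g G) := by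
  have e1 : G.Adj A X := h1.symm
  have e2 : G.Adj p A := h2.symm
  have e3 : G.Adj q p := h3.symm
  have e4 : G.Adj B q := h4.symm
  have e5 : G.Adj X B := h5.symm
  have m1 : ¬G.Adj p X := fun h => n1 h.symm
  have m2 : ¬G.Adj q A := fun h => n2 h.symm
  have m3 : ¬G.Adj B p := fun h => n3 h.symm
  have m4 : ¬G.Adj X q := fun h => n4 h.symm
  have m5 : ¬G.Adj A B := fun h => n5 h.symm
  have i1 : ¬G.Adj X X := G.loopless.irrefl X
  have i2 : ¬G.Adj A A := G.loopless.irrefl A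
  have i3 : ¬G.Adj p p := G.loopless.irrefl p
  have i4 : ¬G.Adj q q := G.loopless.irrefl q
  have i5 : ¬G.Adj B B := G.loopless.irrefl B
  have g1 : X ≠ A := h1.ne
  have g2 : A ≠ p := h2.ne
  have g3 : p ≠ q := h3.ne
  have g4 : q ≠ B := h4.ne
  have g5 : B ≠ X := h5.ne
  let f : Fin 5 → V := ![X, A, p, q, B]
  refine ⟨⟨⟨f, ?_⟩, ?_⟩⟩
  · intro i j hij
    fin_cases i <;> fin_cases j <;> simp_all [f]
  · intro i j
    show G.Adj (f i) (f j) ↔ _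
    fin_cases i <;> fin_cases j <;>
      simp_all [f, SimpleGraph.cycleGraph_adj, Fin.ext_iff] <;> decide

theorem induced_five_cycle {V : Type*} [Fintype V] (G : SimpleGraph V)
    (hG : IsMinimalPrimeGraphComplement G) (X A B : V)
    (hXA : G.Adj X A) (hXB : G.Adj X B) (hAB : A ≠ B)
    (hdeg : ∀ v, G.Adj X v → v = A ∨ v = B)
    (a b : V)
    (hcover : ∀ v : V, v = A ∨ v = B ∨ v = a ∨ v = b ∨ (∀ w : V, G.Adj v w ↔ G.Adj X w)) :
    Nonempty (SimpleGraph.cycleGraph 5 ↪g G) := by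
  classical
  have hCF := hG.2.1
  have hconn := hG.2.2.2.1
  set Tw : V → Prop := fun c => ∀ w, G.Adj c w ↔ G.Adj X w with hTw
  have hABn : ¬ G.Adj A B := fun h => tri_free hCF hXA hXB h
  have twA : ∀ c, Tw c → G.Adj c A := fun c h => (h A).mpr hXA
  have twB : ∀ c, Tw c → G.Adj c B := fun c h => (h B).mpr hXB
  have twX : Tw X := fun w => Iff.rfl
  -- a special vertex exists
  have hex : ∃ c, c ≠ A ∧ c ≠ B ∧ ¬ Tw c := by
    by_contra h
    push_neg at h
    have hall : ∀ c, c = A ∨ c = B ∨ Tw c := by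
      intro c
      by_cases h1 : c = A
      · exact Or.inl h1
      by_cases h2 : c = B
      · exact Or.inr (Or.inl h2)
      · exact Or.inr (Or.inr (h c h1 h2))
    have step : ∀ c w, Tw c → Gᶜ.Adj c w → Tw w := by
      intro c w hc hcw
      rcases hall w with rfl | rfl | h
      · exact absurd (twA c hc) hcw.2
      · exact absurd (twB c hc) hcw.2
      · exact h
    have main : ∀ u w, Gᶜ.Walk u w → Tw u → Tw w := by
      intro u w p
      induction p with
      | nil => exact id
      | cons h q ih => exact fun hu => ih (step _ _ hu h)
    obtain ⟨p⟩ := hconn.preconnected X A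
    have hTwA := main X A p twX
    have : G.Adj A A := twA A hTwA
    exact G.loopless.irrefl A this
  -- facts about special vertices
  have hXiff : ∀ w, G.Adj X w ↔ (w = A ∨ w = B) := by
    intro w
    constructor
    · exact hdeg w
    · rintro (rfl | rfl)
      exacts [hXA, hXB]
  have specX : ∀ c, c ≠ A → c ≠ B → ¬ G.Adj X c := by
    intro c h1 h2 h
    rcases hdeg c h with rfl | rfl <;> simp_all
  have specnX : ∀ c, ¬ Tw c → c ≠ X := fun c h hc => h (by subst hc; exact twX)
  have spec_tw : ∀ c t, c ≠ A → c ≠ B → Tw t → ¬ G.Adj c t := by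
    intro c t h1 h2 ht h
    have : G.Adj X c := (ht c).mp h.symm
    exact specX c h1 h2 this
  -- key: a special vertex cannot have all neighbors within {A, B}
  have spec_sub : ∀ c, c ≠ A → c ≠ B → ¬ Tw c → (∀ w, G.Adj c w → w = A ∨ w = B) → False := by
    intro c h1 h2 h3 hsub
    have hnboth : ¬ (G.Adj c A ∧ G.Adj c B) := by
      rintro ⟨hA, hB⟩
      apply h3
      intro w
      rw [hXiff w]
      constructor
      · exact hsub w
      · rintro (rfl | rfl)
        exacts [hA, hB]
    by_cases hcA : G.Adj c A
    · have hcB : ¬ G.Adj c B := fun h => hnboth ⟨hcA, h⟩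
      refine no_lonely hG (u := B) (v := c) (n := A) (Ne.symm h2) (fun h => hcB h.symm) ?_
        (fun h => hABn h.symm)
      intro w hw
      rcases hsub w hw with rfl | rfl
      · rfl
      · exact absurd hw hcB
    · by_cases hcB : G.Adj c B
      · refine no_lonely hG (u := A) (v := c) (n := B) (Ne.symm h1) (fun h => hcA h.symm) ?_ hABn
        intro w hw
        rcases hsub w hw with rfl | rfl
        · exact absurd hw hcA
        · rfl
      · refine no_lonely hG (u := X) (v := c) (n := c) (Ne.symm (specnX c h3))
          (specX c h1 h2) ?_ (specX c h1 h2)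
        intro w hw
        rcases hsub w hw with rfl | rfl
        · exact absurd hw hcA
        · exact absurd hw hcB
  -- both a and b are special
  have himp : ∀ c d : V, c ≠ A → c ≠ B → ¬ Tw c →
      (∀ v : V, v = A ∨ v = B ∨ v = c ∨ v = d ∨ Tw v) →
      d ≠ A ∧ d ≠ B ∧ ¬ Tw d := by
    intro c d h1 h2 h3 hcov
    by_contra hd
    have hd' : d = A ∨ d = B ∨ Tw d := by
      by_contra h
      push_neg at h
      exact hd ⟨h.1, h.2.1, h.2.2⟩
    refine spec_sub c h1 h2 h3 ?_
    intro w hw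
    rcases hcov w with rfl | rfl | rfl | rfl | htw
    · exact Or.inl rfl
    · exact Or.inr rfl
    · exact absurd hw (G.irrefl)
    · rcases hd' with rfl | rfl | htd
      · exact Or.inl rfl
      · exact Or.inr rfl
      · exact absurd hw (spec_tw _ _ h1 h2 htd)
    · exact absurd hw (spec_tw _ _ h1 h2 htw)
  obtain ⟨c0, hc1, hc2, hc3⟩ := hex
  have hspec : (a ≠ A ∧ a ≠ B ∧ ¬ Tw a) ∧ (b ≠ A ∧ b ≠ B ∧ ¬ Tw b) := by
    rcases hcover c0 with h | h | h | h | htw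
    · exact absurd h hc1
    · exact absurd h hc2
    · rw [h] at hc1 hc2 hc3
      exact ⟨⟨hc1, hc2, hc3⟩, himp a b hc1 hc2 hc3 hcover⟩
    · rw [h] at hc1 hc2 hc3
      have hcov' : ∀ v : V, v = A ∨ v = B ∨ v = b ∨ v = a ∨ Tw v := by
        intro v
        rcases hcover v with h | h | h | h | h
        exacts [Or.inl h, Or.inr (Or.inl h), Or.inr (Or.inr (Or.inr (Or.inl h))),
          Or.inr (Or.inr (Or.inl h)), Or.inr (Or.inr (Or.inr (Or.inr h)))]
      exact ⟨himp b a hc1 hc2 hc3 hcov', ⟨hc1, hc2, hc3⟩⟩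
    · exact absurd htw hc3
  obtain ⟨⟨haA, haB, haT⟩, ⟨hbA, hbB, hbT⟩⟩ := hspec
  -- a and b are adjacent
  have hab : G.Adj a b := by
    by_contra hab
    refine spec_sub a haA haB haT ?_
    intro w hw
    rcases hcover w with rfl | rfl | rfl | rfl | htw
    · exact Or.inl rfl
    · exact Or.inr rfl
    · exact absurd hw (G.irrefl)
    · exact absurd hw hab
    · exact absurd hw (spec_tw _ _ haA haB htw)
  have hba : a ≠ b := hab.ne
  have hcovb : ∀ v : V, v = A ∨ v = B ∨ v = b ∨ v = a ∨ Tw v := by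
    intro v
    rcases hcover v with h | h | h | h | h
    exacts [Or.inl h, Or.inr (Or.inl h), Or.inr (Or.inr (Or.inr (Or.inl h))),
      Or.inr (Or.inr (Or.inl h)), Or.inr (Or.inr (Or.inr (Or.inr h)))]
  have key1 : ∀ c d : V, c ≠ A → c ≠ B → d ≠ A → d ≠ B →
      (∀ v : V, v = A ∨ v = B ∨ v = c ∨ v = d ∨ Tw v) → G.Adj c A ∨ G.Adj c B := by
    intro c d h1 h2 h3 h4 hcov
    by_contra h
    push_neg at h
    obtain ⟨hA, hB⟩ := h
    refine no_lonely hG (u := X) (v := c) (n := d)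
      (Ne.symm (specnX c (fun ht => hA (twA c ht)))) (specX c h1 h2) ?_ (specX d h3 h4)
    intro w hw
    rcases hcov w with rfl | rfl | rfl | rfl | htw
    · exact absurd hw hA
    · exact absurd hw hB
    · exact absurd hw (G.irrefl)
    · rfl
    · exact absurd hw (spec_tw _ _ h1 h2 htw)
  have haAB := key1 a b haA haB hbA hbB hcover
  have hbAB := key1 b a hbA hbB haA haB hcovb
  rcases haAB with hA' | hB'
  · have hbA' : ¬ G.Adj b A := fun h => tri_free hCF hab hA' h
    have hbB' : G.Adj b B := hbAB.resolve_left hbA'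
    have haB' : ¬ G.Adj a B := fun h => tri_free hCF hab h hbB'
    exact build_c5 hXA hA'.symm hab hbB' hXB.symm
      (specX a haA haB) (fun h => hbA' h.symm) haB'
      (fun h => specX b hbA hbB h.symm) (fun h => hABn h.symm)
      (Ne.symm (specnX a haT)) (Ne.symm hbA) haB (specnX b hbT) (Ne.symm hAB)
  · have hbB' : ¬ G.Adj b B := fun h => tri_free hCF hab hB' h
    have hbA' : G.Adj b A := hbAB.resolve_right hbB'
    have haA' : ¬ G.Adj a A := fun h => tri_free hCF hab h hbA'
    exact build_c5 hXA hbA'.symm hab.symm hB' hXB.symm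
      (specX b hbA hbB) (fun h => haA' h.symm) hbB'
      (fun h => specX a haA haB h.symm) (fun h => hABn h.symm)
      (Ne.symm (specnX b hbT)) (Ne.symm haA) hbB (specnX a haT) (Ne.symm hAB)
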